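/- Let K be a triangle with a horizontal edge σ = (0, h_σ) × {0}, diameter h_K, and inscribed-ball diameter ξ_K, and let z = (z_1, z_2) be the vertex opposite to σ. Then z_2 ≥ ξ_K, and consequently the rectangle (h_σ/3, 2h_σ/3) × (0, h_σ·ξ_K/(12·h_K)) is contained in K. -/

import Mathlib

open MeasureTheory

/-- For a triangle `K` with horizontal edge `σ` from `(0,0)` to `(h_σ,0)`, opposite vertex
`z` in the upper half-plane, diameter `h_K` and containing a ball of diameter `ξ`, one has
`z₂ ≥ ξ` and the rectangle `(h_σ/3, 2h_σ/3) × (0, h_σ ξ /(12 h_K))` is contained in `K`. -/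
theorem triangle_rectangle_inclusion
    (A B z : EuclideanSpace ℝ (Fin 2)) (hσ ξ : ℝ)
    (hA0 : A 0 = 0) (hA1 : A 1 = 0) (hB0 : B 0 = hσ) (hB1 : B 1 = 0)
    (hhσ : 0 < hσ) (hz : 0 < z 1) (hξ : 0 < ξ)
    (hball : ∃ x : EuclideanSpace ℝ (Fin 2),
      Metric.ball x (ξ / 2) ⊆ convexHull ℝ ({A, B, z} : Set (EuclideanSpace ℝ (Fin 2)))) :
    ξ ≤ z 1 ∧
      ∀ w : EuclideanSpace ℝ (Fin 2),
        w 0 ∈ Set.Ioo (hσ / 3) (2 * hσ / 3) →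
        w 1 ∈ Set.Ioo 0 (hσ * ξ /
          (12 * Metric.diam (convexHull ℝ ({A, B, z} : Set (EuclideanSpace ℝ (Fin 2)))))) →
        w ∈ convexHull ℝ ({A, B, z} : Set (EuclideanSpace ℝ (Fin 2))) := by
  obtain ⟨x, hx⟩ := hball
  -- the triangle is contained in the horizontal slab 0 ≤ y ≤ z 1
  have hslabconv : Convex ℝ {p : EuclideanSpace ℝ (Fin 2) | 0 ≤ p 1 ∧ p 1 ≤ z 1} := by
    intro p hp q hq a b ha hb hab
    obtain ⟨hp1, hp2⟩ := hp
    obtain ⟨hq1, hq2⟩ := hq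
    have hcoord : (a • p + b • q) 1 = a * p 1 + b * q 1 := rfl
    constructor
    · show (0:ℝ) ≤ (a • p + b • q) 1
      rw [hcoord]; nlinarith
    · show (a • p + b • q) 1 ≤ z 1
      rw [hcoord]; nlinarith
  have hslab : convexHull ℝ ({A, B, z} : Set (EuclideanSpace ℝ (Fin 2))) ⊆
      {p | 0 ≤ p 1 ∧ p 1 ≤ z 1} := by
    apply convexHull_min _ hslabconv
    rintro p (rfl | rfl | rfl) <;> simp [hA1, hB1, hz.le]
  have key : ∀ t : ℝ, |t| < ξ / 2 → 0 ≤ x 1 + t ∧ x 1 + t ≤ z 1 := by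
    intro t ht
    have hmem : (x + EuclideanSpace.single 1 t : EuclideanSpace ℝ (Fin 2)) ∈ Metric.ball x (ξ / 2) := by
      rw [Metric.mem_ball, dist_self_add_left, EuclideanSpace.norm_single]
      simpa using ht
    have h := hslab (hx hmem)
    have hcoord : (x + EuclideanSpace.single 1 t : EuclideanSpace ℝ (Fin 2)) 1 = x 1 + t := by
      simp [EuclideanSpace.single_apply]
    rw [Set.mem_setOf_eq, hcoord] at h
    exact h
  have hξz : ξ ≤ z 1 := by
    by_contra h
    push_neg at h
    have ht : |(z 1 + ξ) / 4| < ξ / 2 := by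
      rw [abs_of_pos (by linarith)]; linarith
    have ht' : |(-((z 1 + ξ) / 4))| < ξ / 2 := by rwa [abs_neg]
    have h1 := key _ ht
    have h2 := key _ ht'
    have h21 := h2.1
    have h12 := h1.2
    linarith
  refine ⟨hξz, ?_⟩
  intro w hw0 hw1
  set S := convexHull ℝ ({A, B, z} : Set (EuclideanSpace ℝ (Fin 2))) with hSdef
  set d := Metric.diam S with hddef
  have hAS : A ∈ S := subset_convexHull ℝ _ (by simp)
  have hBS : B ∈ S := subset_convexHull ℝ _ (by simp)
  have hzS : z ∈ S := subset_convexHull ℝ _ (by simp)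
  have hfin : ({A, B, z} : Set (EuclideanSpace ℝ (Fin 2))).Finite := Set.toFinite _
  have hbdd : Bornology.IsBounded S := (hfin.isCompact_convexHull ℝ).isBounded
  have hdAB : dist A B = hσ := by
    rw [EuclideanSpace.dist_eq]
    rw [Fin.sum_univ_two]
    rw [hA0, hA1, hB0, hB1]
    rw [Real.dist_eq, Real.dist_eq]
    rw [show |(0:ℝ) - hσ| = hσ by rw [abs_sub_comm]; simpa using abs_of_pos hhσ]
    simp [Real.sqrt_sq hhσ.le]
  have hd : hσ ≤ d := hdAB ▸ Metric.dist_le_diam_of_mem hbdd hAS hBS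
  have hd0 : 0 < d := lt_of_lt_of_le hhσ hd
  have hzd : |z 0| ≤ d := by
    have h1 : |z 0| ≤ dist z A := by
      rw [EuclideanSpace.dist_eq, Fin.sum_univ_two, hA0, hA1]
      have : |z 0| = Real.sqrt (dist (z 0) 0 ^ 2) := by
        rw [Real.dist_eq, sub_zero, Real.sqrt_sq_eq_abs, abs_abs]
      rw [this]
      apply Real.sqrt_le_sqrt
      nlinarith [dist_nonneg (x := z 1) (y := (0:ℝ))]
    exact h1.trans (Metric.dist_le_diam_of_mem hbdd hzS hAS)
  obtain ⟨hw0l, hw0r⟩ := hw0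
  obtain ⟨hw1l, hw1r⟩ := hw1
  set c := w 1 / z 1 with hc
  set b := (w 0 - c * z 0) / hσ with hb
  set a := 1 - b - c with ha
  have hc0 : 0 ≤ c := div_nonneg hw1l.le hz.le
  have hw1r' : w 1 * (12 * d) < hσ * ξ := by
    rw [hc] at *
    exact (lt_div_iff₀ (by positivity)).mp hw1r
  have hcd : c * d < hσ / 12 := by
    rw [hc, div_mul_eq_mul_div, div_lt_iff₀ hz]
    nlinarith [mul_le_mul_of_nonneg_left hξz hhσ.le]
  have hcz : |c * z 0| < hσ / 12 := by
    rw [abs_mul, abs_of_nonneg hc0]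
    calc c * |z 0| ≤ c * d := mul_le_mul_of_nonneg_left hzd hc0
      _ < hσ / 12 := hcd
  have hc12 : c < 1 / 12 := by nlinarith
  have hczl := neg_abs_le (c * z 0)
  have hczr := le_abs_self (c * z 0)
  have hb0 : 0 ≤ b := by
    apply div_nonneg _ hhσ.le
    linarith
  have hb34 : b < 3 / 4 := by
    rw [hb, div_lt_iff₀ hhσ]
    linarith
  have ha0 : 0 ≤ a := by rw [ha]; linarith
  -- express w as a convex combination
  have hwcomb : w = a • A + b • B + c • z := by
    ext i
    fin_cases i
    · show w 0 = a * A 0 + b * B 0 + c * z 0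
      rw [hA0, hB0, hb]
      field_simp
      ring
    · show w 1 = a * A 1 + b * B 1 + c * z 1
      rw [hA1, hB1, hc]
      field_simp
      ring
  rw [hwcomb]
  have hsum : a + b + c = 1 := by rw [ha]; ring
  have := (convex_convexHull ℝ ({A, B, z} : Set (EuclideanSpace ℝ (Fin 2)))).sum_mem
    (t := Finset.univ) (w := ![a, b, c]) (z := ![A, B, z])
    (by
      intro i _
      fin_cases i
      · simpa using ha0
      · simpa using hb0
      · simpa using hc0)
    (by simp [Fin.sum_univ_three, hsum])
    (by intro i _; fin_cases i <;> simp [hAS, hBS, hzS] <;> assumption)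
  simpa [Fin.sum_univ_three] using this
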